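/- Let M̃ = (r,s,u) be a triangular fuzzy number with r < s < u and α ∈ [1/2, 1]. Then Cr(M̃ ≤ b) ≥ α holds if and only if the upper endpoint of the 2(1−α)-cut of M̃ is at most b: (M̃)_{2(1−α)}^U ≤ b. -/
import Mathlib


/-- Credibility distribution Cr(M ≤ b) of the triangular fuzzy number (r,s,u). -/
noncomputable def crLe (r s u b : ℝ) : ℝ :=
  if b ≤ r then 0
  else if b ≤ s then (b - r) / (2 * (s - r))
  else if b ≤ u then (b - 2 * s + u) / (2 * (u - s))
  else 1

theorem crLe_ge_alpha_iff_cut (r s u : ℝ) (hrs : r < s) (hsu : s < u)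
    (α : ℝ) (hα : α ∈ Set.Icc (1 / 2 : ℝ) 1) :
    ∀ b : ℝ, α ≤ crLe r s u b ↔ u - 2 * (1 - α) * (u - s) ≤ b := by
  obtain ⟨h1, h2⟩ := hα
  intro b
  have hus : (0:ℝ) < u - s := by linarith
  have hsr : (0:ℝ) < s - r := by linarith
  unfold crLe
  by_cases hbr : b ≤ r
  · simp only [hbr, if_true]
    constructor
    · intro h; linarith
    · intro h; nlinarith
  · simp only [hbr, if_false]
    by_cases hbs : b ≤ s
    · simp only [hbs, if_true]
      push_neg at hbr
      constructor
      · intro h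
        rw [le_div_iff₀ (by linarith)] at h
        have hb : b = s := le_antisymm hbs (by nlinarith)
        have : α = 1 / 2 := by nlinarith
        subst hb; rw [this]; ring_nf; linarith
      · intro h
        rw [le_div_iff₀ (by linarith)]
        have ht : (2 * α - 1) * (u - s) ≤ 0 := by nlinarith
        have hα2 : α = 1 / 2 := by nlinarith
        subst hα2; nlinarith
    · simp only [hbs, if_false]
      push_neg at hbs
      by_cases hbu : b ≤ u
      · simp only [hbu, if_true]
        rw [le_div_iff₀ (by linarith)]
        constructor <;> intro h <;> nlinarith
      · simp only [hbu, if_false]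
        push_neg at hbu
        constructor
        · intro _; nlinarith
        · intro _; exact h2
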